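/- arXiv:1704.03089 — 2 statements merged into one kernel-verified Lean document; each statement's English description precedes it below -/
import Mathlib

section
/- Let ψ:[t₀,∞)→(0,∞) be non-increasing with tψ(t)<1 for all large t, and let Ψ(t)=tψ(t)/(1−tψ(t)). Let x∈[0,1) be irrational with partial quotients a_n(x) and convergent denominators q_n(x). If a_{n+1}(x)·a_n(x) ≤ Ψ(q_n(x))/4 for all sufficiently large n, then x is ψ-Dirichlet improvable, i.e. x∈D(ψ). -/
open Filter MeasureTheory Set

/-- The set `D(ψ)` of `ψ`-Dirichlet improvable numbers: those `x ∈ ℝ` such that for all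
sufficiently large `t` the system `|qx - p| < ψ t`, `|q| < t` has a nontrivial integer
solution `(p, q)`. -/
def DirichletSet (ψ : ℝ → ℝ) : Set ℝ :=
  {x | ∃ N : ℝ, ∀ t : ℝ, t > N →
    ∃ p q : ℤ, (p, q) ≠ (0, 0) ∧ |(q : ℝ) * x - p| < ψ t ∧ |(q : ℝ)| < t}

/-- The Gauss map `T(x) = 1/x mod 1`, with `T(0) = 0`. -/
noncomputable def gaussMap (x : ℝ) : ℝ := if x = 0 then 0 else Int.fract (1 / x)

/-- `cfA x n` is the `n`-th partial quotient `a_n(x)` of the continued fraction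
expansion of `x ∈ [0,1)`, for `n ≥ 1`: `a_n(x) = ⌊1 / T^{n-1}(x)⌋`. -/
noncomputable def cfA (x : ℝ) (n : ℕ) : ℕ := ⌊1 / (gaussMap^[n - 1] x)⌋₊

/-- `cfQ x n` is the denominator `q_n(x)` of the `n`-th convergent of `x`:
`q₀ = 1`, `q₁ = a₁`, `q_{n+2} = a_{n+2} q_{n+1} + q_n`. -/
noncomputable def cfQ (x : ℝ) : ℕ → ℕ
  | 0 => 1
  | 1 => cfA x 1
  | (n + 2) => cfA x (n + 2) * cfQ x (n + 1) + cfQ x n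

noncomputable def cfP (x : ℝ) : ℕ → ℕ
  | 0 => 0
  | 1 => 1
  | (n + 2) => cfA x (n + 2) * cfP x (n + 1) + cfP x n

lemma gauss_iter (x : ℝ) (hirr : Irrational x) (hx : x ∈ Set.Ioo (0:ℝ) 1) (n : ℕ) :
    Irrational (gaussMap^[n] x) ∧ gaussMap^[n] x ∈ Set.Ioo (0:ℝ) 1 := by
  induction n with
  | zero => exact ⟨hirr, hx⟩
  | succ n ih =>
    obtain ⟨h1, h2⟩ := ih
    rw [Function.iterate_succ_apply']
    have hne : gaussMap^[n] x ≠ 0 := ne_of_gt h2.1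
    have hinv : Irrational (1 / gaussMap^[n] x) := by
      rw [one_div]; exact h1.inv
    have hfr : Irrational (Int.fract (1 / gaussMap^[n] x)) := by
      rw [Int.fract]; exact hinv.sub_intCast _
    have hne0 : Int.fract (1 / gaussMap^[n] x) ≠ 0 := by
      intro hz; rw [hz] at hfr; exact not_irrational_zero hfr
    refine ⟨by simpa [gaussMap, hne] using hfr, ?_⟩
    simp only [gaussMap, hne, if_false]
    exact ⟨lt_of_le_of_ne (Int.fract_nonneg _) (Ne.symm hne0), Int.fract_lt_one _⟩

lemma one_div_iter (x : ℝ) (hirr : Irrational x) (hx : x ∈ Set.Ioo (0:ℝ) 1) (n : ℕ) :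
    1 / gaussMap^[n] x = (cfA x (n+1) : ℝ) + gaussMap^[n+1] x := by
  obtain ⟨h1, h2⟩ := gauss_iter x hirr hx n
  have hne : gaussMap^[n] x ≠ 0 := ne_of_gt h2.1
  have hgt : 1 < 1 / gaussMap^[n] x := one_lt_one_div h2.1 h2.2
  have hpos : (0:ℝ) ≤ 1 / gaussMap^[n] x := by linarith
  have hA : ((cfA x (n+1) : ℕ) : ℝ) = (⌊1 / gaussMap^[n] x⌋ : ℝ) := by
    simp only [cfA, Nat.add_sub_cancel]
    exact natCast_floor_eq_intCast_floor hpos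
  rw [Function.iterate_succ_apply']
  simp only [gaussMap, hne, if_false]
  rw [hA, Int.fract]
  ring

lemma cfA_pos (x : ℝ) (hirr : Irrational x) (hx : x ∈ Set.Ioo (0:ℝ) 1) (n : ℕ) :
    1 ≤ cfA x (n+1) := by
  obtain ⟨h1, h2⟩ := gauss_iter x hirr hx n
  have hgt : 1 ≤ 1 / gaussMap^[n] x := le_of_lt (one_lt_one_div h2.1 h2.2)
  simp only [cfA, Nat.add_sub_cancel]
  exact Nat.le_floor (by exact_mod_cast hgt)

lemma cfQ_one_le_and_mono (x : ℝ) (hirr : Irrational x) (hx : x ∈ Set.Ioo (0:ℝ) 1) (n : ℕ) :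
    1 ≤ cfQ x n ∧ cfQ x n ≤ cfQ x (n+1) := by
  induction n with
  | zero =>
    refine ⟨le_refl 1, ?_⟩
    show 1 ≤ cfQ x 1
    exact cfA_pos x hirr hx 0
  | succ n ih =>
    refine ⟨le_trans ih.1 ih.2, ?_⟩
    show cfQ x (n+1) ≤ cfA x (n+2) * cfQ x (n+1) + cfQ x n
    have hA := cfA_pos x hirr hx (n+1)
    calc cfQ x (n+1) = 1 * cfQ x (n+1) := (one_mul _).symm
      _ ≤ cfA x (n+2) * cfQ x (n+1) + cfQ x n := by
          exact le_trans (Nat.mul_le_mul_right _ hA) (Nat.le_add_right _ _)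

lemma cfQ_ge (x : ℝ) (hirr : Irrational x) (hx : x ∈ Set.Ioo (0:ℝ) 1) (n : ℕ) :
    n ≤ cfQ x n ∧ n + 1 ≤ cfQ x (n+1) := by
  induction n with
  | zero => exact ⟨Nat.zero_le _, cfA_pos x hirr hx 0⟩
  | succ n ih =>
    refine ⟨ih.2, ?_⟩
    show n + 2 ≤ cfA x (n+2) * cfQ x (n+1) + cfQ x n
    have hA := cfA_pos x hirr hx (n+1)
    have h1 := (cfQ_one_le_and_mono x hirr hx n).1
    calc n + 2 ≤ cfQ x (n+1) + cfQ x n := by omega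
      _ ≤ cfA x (n+2) * cfQ x (n+1) + cfQ x n := by
          exact Nat.add_le_add_right (Nat.le_mul_of_pos_left _ hA) _

lemma cf_identity (x : ℝ) (hirr : Irrational x) (hx : x ∈ Set.Ioo (0:ℝ) 1) (n : ℕ) :
    x * ((cfQ x (n+1) : ℝ) + (cfQ x n : ℝ) * gaussMap^[n+1] x)
      = (cfP x (n+1) : ℝ) + (cfP x n : ℝ) * gaussMap^[n+1] x := by
  induction n with
  | zero =>
    have h0 := one_div_iter x hirr hx 0
    simp only [Function.iterate_zero_apply] at h0
    norm_num at h0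
    have hxne : x ≠ 0 := ne_of_gt hx.1
    show x * ((cfQ x 1 : ℝ) + (cfQ x 0 : ℝ) * gaussMap^[1] x)
        = (cfP x 1 : ℝ) + (cfP x 0 : ℝ) * gaussMap^[1] x
    have hq1 : (cfQ x 1 : ℝ) = (cfA x 1 : ℝ) := by norm_cast
    have hq0 : (cfQ x 0 : ℝ) = 1 := by norm_cast
    have hp1 : (cfP x 1 : ℝ) = 1 := by norm_cast
    have hp0 : (cfP x 0 : ℝ) = 0 := by norm_cast
    rw [hq1, hq0, hp1, hp0]
    have h1 : gaussMap^[1] x = gaussMap x := by simp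
    rw [h1]
    have h0' : x * ((cfA x 1 : ℝ) + gaussMap x) = 1 := by
      rw [← h0]; field_simp
    linear_combination h0'
  | succ n ih =>
    set y := gaussMap^[n+1] x with hy
    set z := gaussMap^[n+2] x with hz
    have hrel := one_div_iter x hirr hx (n+1)
    have hypos := (gauss_iter x hirr hx (n+1)).2.1
    have hyz : y * ((cfA x (n+2) : ℝ) + z) = 1 := by
      have : (cfA x (n+2) : ℝ) + z = 1 / y := hrel.symm
      rw [this]; field_simp
      exact div_self (ne_of_gt hypos)
    have hQ : (cfQ x (n+2) : ℝ) = (cfA x (n+2) : ℝ) * cfQ x (n+1) + cfQ x n := by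
      show ((cfA x (n+2) * cfQ x (n+1) + cfQ x n : ℕ) : ℝ) = _
      push_cast; ring
    have hP : (cfP x (n+2) : ℝ) = (cfA x (n+2) : ℝ) * cfP x (n+1) + cfP x n := by
      show ((cfA x (n+2) * cfP x (n+1) + cfP x n : ℕ) : ℝ) = _
      push_cast; ring
    rw [hQ, hP]
    linear_combination ((cfA x (n+2) : ℝ) + z) * ih - (x * (cfQ x n : ℝ) - (cfP x n : ℝ)) * hyz

lemma cf_det (x : ℝ) (n : ℕ) :
    (cfP x (n+1) : ℤ) * (cfQ x n : ℤ) - (cfP x n : ℤ) * (cfQ x (n+1) : ℤ) = (-1)^n := by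
  induction n with
  | zero => simp [cfP, cfQ]
  | succ n ih =>
    have hQ : (cfQ x (n+2) : ℤ) = (cfA x (n+2) : ℤ) * cfQ x (n+1) + cfQ x n := by
      show ((cfA x (n+2) * cfQ x (n+1) + cfQ x n : ℕ) : ℤ) = _
      push_cast; ring
    have hP : (cfP x (n+2) : ℤ) = (cfA x (n+2) : ℤ) * cfP x (n+1) + cfP x n := by
      show ((cfA x (n+2) * cfP x (n+1) + cfP x n : ℕ) : ℤ) = _
      push_cast; ring
    rw [hP, hQ, pow_succ]
    linear_combination (-1 : ℤ) * ih

lemma cf_error (x : ℝ) (hirr : Irrational x) (hx : x ∈ Set.Ioo (0:ℝ) 1) (n : ℕ) :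
    |(cfQ x n : ℝ) * x - (cfP x n : ℝ)|
      = 1 / ((cfQ x (n+1) : ℝ) + (cfQ x n : ℝ) * gaussMap^[n+1] x) := by
  set y := gaussMap^[n+1] x with hy
  have hypos := (gauss_iter x hirr hx (n+1)).2.1
  have hq1 : (1:ℝ) ≤ (cfQ x (n+1) : ℝ) := by
    exact_mod_cast (cfQ_one_le_and_mono x hirr hx (n+1)).1
  have hq0 : (0:ℝ) ≤ (cfQ x n : ℝ) := Nat.cast_nonneg _
  have hD : (0:ℝ) < (cfQ x (n+1) : ℝ) + (cfQ x n : ℝ) * y := by nlinarith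
  have hid := cf_identity x hirr hx n
  have hdet : ((cfP x (n+1) : ℝ) * (cfQ x n : ℝ) - (cfP x n : ℝ) * (cfQ x (n+1) : ℝ)) = ((-1:ℝ))^n := by
    exact_mod_cast congrArg (fun z : ℤ => (z : ℝ)) (cf_det x n)
  have key : ((cfQ x n : ℝ) * x - (cfP x n : ℝ)) * ((cfQ x (n+1) : ℝ) + (cfQ x n : ℝ) * y)
      = (-1:ℝ)^n := by
    linear_combination (cfQ x n : ℝ) * hid + hdet
  have habs : |(cfQ x n : ℝ) * x - (cfP x n : ℝ)| * ((cfQ x (n+1) : ℝ) + (cfQ x n : ℝ) * y) = 1 := by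
    rw [← abs_of_pos hD, ← abs_mul, key, abs_pow, abs_neg, abs_one, one_pow]
  field_simp [ne_of_gt hD] at habs ⊢
  linarith [habs]

lemma cfQ_succ_le (x : ℝ) (hirr : Irrational x) (hx : x ∈ Set.Ioo (0:ℝ) 1) (n : ℕ) :
    cfQ x (n+2) ≤ (cfA x (n+2) + 1) * cfQ x (n+1) := by
  have hmono := (cfQ_one_le_and_mono x hirr hx n).2
  show cfA x (n+2) * cfQ x (n+1) + cfQ x n ≤ _
  have : (cfA x (n+2) + 1) * cfQ x (n+1) = cfA x (n+2) * cfQ x (n+1) + cfQ x (n+1) := by ring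
  omega

set_option maxHeartbeats 1600000 in
theorem mem_dirichletSet_of_prod_partial_quotients_le'
    (t₀ : ℝ) (ht₀ : 1 ≤ t₀) (ψ : ℝ → ℝ)
    (hψpos : ∀ t ∈ Ici t₀, 0 < ψ t) (hψanti : AntitoneOn ψ (Ici t₀))
    (hψ1 : ∃ T : ℝ, ∀ t ≥ T, t * ψ t < 1)
    (Ψ : ℝ → ℝ) (hΨ : ∀ t, Ψ t = t * ψ t / (1 - t * ψ t))
    (x : ℝ) (hx : x ∈ Ico (0 : ℝ) 1) (hirr : Irrational x)
    (h : ∃ N : ℕ, ∀ n ≥ N, 0 < n →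
      (cfA x (n + 1) : ℝ) * cfA x n ≤ Ψ (cfQ x n) / 4) :
    x ∈ DirichletSet ψ := by
  classical
  obtain ⟨hx0, hx1⟩ := hx
  have hxne : x ≠ 0 := by
    intro hz; rw [hz] at hirr; exact not_irrational_zero hirr
  have hxIoo : x ∈ Set.Ioo (0:ℝ) 1 := ⟨lt_of_le_of_ne hx0 (Ne.symm hxne), hx1⟩
  obtain ⟨N, hN⟩ := h
  obtain ⟨T, hT⟩ := hψ1
  set K : ℕ := N + 1 + ⌈max t₀ T⌉₊ with hKdef
  have hQK : max t₀ T ≤ (cfQ x K : ℝ) := by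
    have h1 : K ≤ cfQ x K := (cfQ_ge x hirr hxIoo K).1
    have h2 : ⌈max t₀ T⌉₊ ≤ K := by omega
    calc max t₀ T ≤ (⌈max t₀ T⌉₊ : ℝ) := Nat.le_ceil _
      _ ≤ (K : ℝ) := by exact_mod_cast h2
      _ ≤ (cfQ x K : ℝ) := by exact_mod_cast h1
  refine ⟨(cfQ x K : ℝ), fun t ht => ?_⟩
  have ht₀t : t₀ < t := lt_of_le_of_lt (le_trans (le_max_left _ _) hQK) ht
  have hTt : T < t := lt_of_le_of_lt (le_trans (le_max_right _ _) hQK) ht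
  -- find n with q_n < t ≤ q_{n+1}
  set m : ℕ := max K ⌈t⌉₊ with hmdef
  have hQm : t ≤ (cfQ x m : ℝ) := by
    have h1 : m ≤ cfQ x m := (cfQ_ge x hirr hxIoo m).1
    have h2 : ⌈t⌉₊ ≤ m := le_max_right _ _
    calc t ≤ (⌈t⌉₊ : ℝ) := Nat.le_ceil t
      _ ≤ (m : ℝ) := by exact_mod_cast h2
      _ ≤ (cfQ x m : ℝ) := by exact_mod_cast h1
  set P : ℕ → Prop := fun k => K ≤ k ∧ (cfQ x k : ℝ) < t with hPdef
  have hPK : P K := ⟨le_refl _, ht⟩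
  have hKm : K ≤ m := le_max_left _ _
  set n := Nat.findGreatest P m with hndef
  have hPn : P n := Nat.findGreatest_spec hKm hPK
  have hnK : K ≤ n := Nat.le_findGreatest hKm hPK
  have hnm : n < m := by
    rcases lt_or_eq_of_le (Nat.findGreatest_le (P := P) m) with h' | h'
    · exact h'
    · exfalso; rw [hndef, h'] at hPn; exact absurd hQm (not_le.mpr hPn.2)
  have hnot : ¬ P (n+1) := Nat.findGreatest_is_greatest (Nat.lt_succ_self n) (by omega)
  have htq1 : t ≤ (cfQ x (n+1) : ℝ) := by
    by_contra hc
    exact hnot ⟨by omega, not_le.mp hc⟩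
  clear_value n
  clear_value m
  -- numeric setup
  have hy := (gauss_iter x hirr hxIoo (n+1)).2
  have hz := (gauss_iter x hirr hxIoo (n+2)).2
  have hQ0pos : (0:ℝ) < (cfQ x n : ℝ) := by
    exact_mod_cast (cfQ_one_le_and_mono x hirr hxIoo n).1
  have hQ1pos : (0:ℝ) < (cfQ x (n+1) : ℝ) := by
    exact_mod_cast (cfQ_one_le_and_mono x hirr hxIoo (n+1)).1
  have hQ1t₀ : t₀ ≤ (cfQ x (n+1) : ℝ) := le_trans (le_of_lt ht₀t) htq1
  have hQ1T : T ≤ (cfQ x (n+1) : ℝ) := le_trans (le_of_lt hTt) htq1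
  have hu1 : (cfQ x (n+1) : ℝ) * ψ (cfQ x (n+1)) < 1 := hT _ hQ1T
  have hu0 : 0 < (cfQ x (n+1) : ℝ) * ψ (cfQ x (n+1)) :=
    mul_pos hQ1pos (hψpos _ hQ1t₀)
  have h1u : (0:ℝ) < 1 - (cfQ x (n+1) : ℝ) * ψ (cfQ x (n+1)) := by linarith
  -- hypothesis at n+1
  have hhyp := hN (n+1) (by omega) (by omega)
  rw [hΨ] at hhyp
  have hA1 : (1:ℝ) ≤ (cfA x (n+1) : ℝ) := by exact_mod_cast cfA_pos x hirr hxIoo n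
  have hA2 : (1:ℝ) ≤ (cfA x (n+2) : ℝ) := by exact_mod_cast cfA_pos x hirr hxIoo (n+1)
  -- bound A : q_{n+1} ≤ (a_{n+1}+1) q_n
  have hAbound : (cfQ x (n+1) : ℝ) ≤ ((cfA x (n+1) : ℝ) + 1) * (cfQ x n : ℝ) := by
    obtain ⟨m', hm'⟩ : ∃ m', n = m' + 1 := ⟨n - 1, by omega⟩
    have h' := cfQ_succ_le x hirr hxIoo m'
    rw [hm']
    have : (m' + 1) + 1 = m' + 2 := rfl
    rw [this]
    exact_mod_cast h'
  -- bound B : 1 < y (a_{n+2} + 1)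
  have hrel := one_div_iter x hirr hxIoo (n+1)
  have he2 : n + 1 + 1 = n + 2 := rfl
  rw [he2] at hrel hhyp
  have hyy : gaussMap^[n+1] x * ((cfA x (n+2) : ℝ) + gaussMap^[n+2] x) = 1 := by
    rw [← hrel, mul_one_div]
    exact div_self (ne_of_gt hy.1)
  have hB : 1 < gaussMap^[n+1] x * ((cfA x (n+2) : ℝ) + 1) := by
    nlinarith [hy.1, hz.2, hyy]
  -- chain
  have hab : ((cfA x (n+1) : ℝ) + 1) * ((cfA x (n+2) : ℝ) + 1)
      ≤ 4 * (cfA x (n+1) : ℝ) * (cfA x (n+2) : ℝ) := by nlinarith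
  have hQy : (0:ℝ) < (cfQ x n : ℝ) * gaussMap^[n+1] x := mul_pos hQ0pos hy.1
  have hp : (0:ℝ) < ((cfA x (n+1) : ℝ) + 1) * (cfQ x n : ℝ) := by nlinarith
  have hc1 : (cfQ x (n+1) : ℝ)
      < ((cfA x (n+1) : ℝ) + 1) * (cfQ x n : ℝ)
        * (gaussMap^[n+1] x * ((cfA x (n+2) : ℝ) + 1)) := by
    nlinarith [mul_lt_mul_of_pos_left hB hp, hAbound]
  have hc2 : ((cfA x (n+1) : ℝ) + 1) * (cfQ x n : ℝ)
        * (gaussMap^[n+1] x * ((cfA x (n+2) : ℝ) + 1))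
      ≤ 4 * (cfA x (n+1) : ℝ) * (cfA x (n+2) : ℝ) * ((cfQ x n : ℝ) * gaussMap^[n+1] x) := by
    nlinarith [mul_le_mul_of_nonneg_right hab (le_of_lt hQy)]
  have hchain : (cfQ x (n+1) : ℝ)
      < 4 * (cfA x (n+1) : ℝ) * (cfA x (n+2) : ℝ) * ((cfQ x n : ℝ) * gaussMap^[n+1] x) :=
    lt_of_lt_of_le hc1 hc2
  have h4 : 4 * (cfA x (n+1) : ℝ) * (cfA x (n+2) : ℝ)
      ≤ ((cfQ x (n+1) : ℝ) * ψ (cfQ x (n+1))) / (1 - (cfQ x (n+1) : ℝ) * ψ (cfQ x (n+1))) := by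
    nlinarith [hhyp]
  have h5 : (cfQ x (n+1) : ℝ)
      < (((cfQ x (n+1) : ℝ) * ψ (cfQ x (n+1))) / (1 - (cfQ x (n+1) : ℝ) * ψ (cfQ x (n+1))))
        * ((cfQ x n : ℝ) * gaussMap^[n+1] x) :=
    lt_of_lt_of_le hchain (mul_le_mul_of_nonneg_right h4 (le_of_lt hQy))
  have hkey : (1 - (cfQ x (n+1) : ℝ) * ψ (cfQ x (n+1))) * (cfQ x (n+1) : ℝ)
      < ((cfQ x (n+1) : ℝ) * ψ (cfQ x (n+1))) * ((cfQ x n : ℝ) * gaussMap^[n+1] x) := by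
    have h6 := mul_lt_mul_of_pos_left h5 h1u
    have h7 : (1 - (cfQ x (n+1) : ℝ) * ψ (cfQ x (n+1)))
        * ((((cfQ x (n+1) : ℝ) * ψ (cfQ x (n+1))) / (1 - (cfQ x (n+1) : ℝ) * ψ (cfQ x (n+1))))
          * ((cfQ x n : ℝ) * gaussMap^[n+1] x))
        = ((cfQ x (n+1) : ℝ) * ψ (cfQ x (n+1))) * ((cfQ x n : ℝ) * gaussMap^[n+1] x) := by
      field_simp
    rw [h7] at h6
    exact h6
  -- conclude
  have hDpos : (0:ℝ) < (cfQ x (n+1) : ℝ) + (cfQ x n : ℝ) * gaussMap^[n+1] x := by nlinarith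
  have hlt : 1 / ((cfQ x (n+1) : ℝ) + (cfQ x n : ℝ) * gaussMap^[n+1] x)
      < ψ (cfQ x (n+1)) := by
    have hpsiQ1 : ψ ((cfQ x (n+1) : ℝ))
        = ((cfQ x (n+1) : ℝ) * ψ (cfQ x (n+1))) / (cfQ x (n+1) : ℝ) := by
      field_simp
    rw [hpsiQ1, div_lt_div_iff₀ hDpos hQ1pos]
    nlinarith [hkey]
  have hmem_t : t ∈ Ici t₀ := le_of_lt ht₀t
  have hmem_Q1 : ((cfQ x (n+1) : ℝ)) ∈ Ici t₀ := hQ1t₀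
  have hpsi_le : ψ (cfQ x (n+1)) ≤ ψ t := hψanti hmem_t hmem_Q1 htq1
  refine ⟨(cfP x n : ℤ), (cfQ x n : ℤ), ?_, ?_, ?_⟩
  · simp only [ne_eq, Prod.mk.injEq, not_and]
    intro _ hq0
    have : (0:ℝ) < ((cfQ x n : ℤ) : ℝ) := by exact_mod_cast hQ0pos
    rw [hq0] at this
    norm_num at this
  · have herr := cf_error x hirr hxIoo n
    have hcast : |(((cfQ x n : ℤ)) : ℝ) * x - ((cfP x n : ℤ) : ℝ)|
        = |(cfQ x n : ℝ) * x - (cfP x n : ℝ)| := by norm_cast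
    rw [hcast, herr]
    exact lt_of_lt_of_le hlt hpsi_le
  · have : |(((cfQ x n : ℤ)) : ℝ)| = (cfQ x n : ℝ) := by
      push_cast
      exact abs_of_pos hQ0pos
    rw [this]
    exact hPn.2

/-- **Sufficient condition for Dirichlet improvability.** If
`a_{n+1}(x) a_n(x) ≤ Ψ(q_n(x)) / 4` for all sufficiently large `n`, then `x ∈ D(ψ)`. -/
theorem mem_dirichletSet_of_prod_partial_quotients_le
    (t₀ : ℝ) (ht₀ : 1 ≤ t₀) (ψ : ℝ → ℝ)
    (hψpos : ∀ t ∈ Ici t₀, 0 < ψ t) (hψanti : AntitoneOn ψ (Ici t₀))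
    (hψ1 : ∃ T : ℝ, ∀ t ≥ T, t * ψ t < 1)
    (Ψ : ℝ → ℝ) (hΨ : ∀ t, Ψ t = t * ψ t / (1 - t * ψ t))
    (x : ℝ) (hx : x ∈ Ico (0 : ℝ) 1) (hirr : Irrational x)
    (h : ∃ N : ℕ, ∀ n ≥ N, 0 < n →
      (cfA x (n + 1) : ℝ) * cfA x n ≤ Ψ (cfQ x n) / 4) :
    x ∈ DirichletSet ψ := by
  exact mem_dirichletSet_of_prod_partial_quotients_le' t₀ ht₀ ψ hψpos hψanti hψ1 Ψ hΨ x hx hirr h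
end

section
/- Let ψ:[t₀,∞)→(0,∞) be non-increasing with tψ(t)<1 for all large t, and let Ψ(t)=tψ(t)/(1−tψ(t)). Then, within the irrational numbers of [0,1), one has the inclusions G(Ψ) ⊂ D(ψ)^c ⊂ G(Ψ/4). -/
open Filter MeasureTheory Set

/-- `G(Φ)`: the set of irrational `x ∈ [0,1)` with `a_n(x) a_{n+1}(x) > Φ(q_n(x))` for
infinitely many `n`. -/
def GSet (Φ : ℝ → ℝ) : Set ℝ :=
  {x | x ∈ Ico (0 : ℝ) 1 ∧ Irrational x ∧
    {n : ℕ | 0 < n ∧ Φ (cfQ x n) < (cfA x n : ℝ) * cfA x (n + 1)}.Infinite}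

namespace KW

/-- iterates of the Gauss map -/
noncomputable def Xf (x : ℝ) (n : ℕ) : ℝ := gaussMap^[n] x

/-- numerators -/
noncomputable def Pf (x : ℝ) : ℕ → ℤ
  | 0 => 0
  | 1 => 1
  | (n + 2) => cfA x (n + 2) * Pf x (n + 1) + Pf x n

def Good (x : ℝ) : Prop := Irrational x ∧ 0 < x ∧ x < 1

variable {x : ℝ}

lemma Xf_zero : Xf x 0 = x := rfl

lemma Xf_succ (n : ℕ) : Xf x (n + 1) = gaussMap (Xf x n) := Function.iterate_succ_apply' _ _ _

lemma good_X (hg : Good x) : ∀ n, Good (Xf x n) := by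
  intro n; induction n with
  | zero => exact hg
  | succ n ih =>
    obtain ⟨hi, h0, h1⟩ := ih
    have hne : Xf x n ≠ 0 := ne_of_gt h0
    have hfr : Xf x (n + 1) = Int.fract (1 / Xf x n) := by
      rw [Xf_succ, gaussMap, if_neg hne]
    have hinv : Irrational (1 / Xf x n) := by
      simpa [one_div] using hi.inv
    have hirr2 : Irrational (Xf x (n + 1)) := by
      rw [hfr]; unfold Int.fract; exact hinv.sub_intCast _
    refine ⟨hirr2, ?_, ?_⟩
    · rw [hfr]; exact Int.fract_pos.mpr (hinv.ne_int _)
    · rw [hfr]; exact Int.fract_lt_one _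

lemma cfA_succ (n : ℕ) : cfA x (n + 1) = ⌊1 / Xf x n⌋₊ := rfl

lemma one_lt_inv_X (hg : Good x) (n : ℕ) : 1 < 1 / Xf x n := by
  obtain ⟨_, h0, h1⟩ := good_X hg n
  rw [lt_div_iff₀ h0]; linarith

lemma A_ge_one (hg : Good x) (n : ℕ) : 1 ≤ cfA x (n + 1) := by
  rw [cfA_succ]
  exact Nat.le_floor (by exact_mod_cast (one_lt_inv_X hg n).le)

lemma one_div_X_eq (hg : Good x) (n : ℕ) :
    1 / Xf x n = (cfA x (n + 1) : ℝ) + Xf x (n + 1) := by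
  obtain ⟨hi, h0, h1⟩ := good_X hg n
  have hne : Xf x n ≠ 0 := ne_of_gt h0
  have hfr : Xf x (n + 1) = Int.fract (1 / Xf x n) := by
    rw [Xf_succ, gaussMap, if_neg hne]
  have hpos : (0:ℝ) ≤ 1 / Xf x n := by positivity
  have hcast : ((⌊1 / Xf x n⌋₊ : ℕ) : ℝ) = ((⌊1 / Xf x n⌋ : ℤ) : ℝ) := by
    exact_mod_cast congrArg (fun z : ℤ => (z : ℝ)) (Int.natCast_floor_eq_floor hpos)
  rw [cfA_succ, hfr, Int.fract, hcast]
  ring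

lemma A_lt_inv (hg : Good x) (n : ℕ) : (cfA x (n + 1) : ℝ) < 1 / Xf x n := by
  have h := one_div_X_eq hg n
  have h0 := (good_X hg (n + 1)).2.1
  linarith

lemma inv_lt_A_add_one (hg : Good x) (n : ℕ) : 1 / Xf x n < (cfA x (n + 1) : ℝ) + 1 := by
  have h := one_div_X_eq hg n
  have h1 := (good_X hg (n + 1)).2.2
  linarith

/-- signed error terms -/
noncomputable def rf (x : ℝ) (n : ℕ) : ℝ := (cfQ x n : ℝ) * x - (Pf x n : ℝ)

lemma cfQ_two (n : ℕ) : cfQ x (n + 2) = cfA x (n + 2) * cfQ x (n + 1) + cfQ x n := rfl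

lemma Pf_two (n : ℕ) : Pf x (n + 2) = (cfA x (n + 2) : ℤ) * Pf x (n + 1) + Pf x n := rfl

lemma rf_two (n : ℕ) : rf x (n + 2) = (cfA x (n + 2) : ℝ) * rf x (n + 1) + rf x n := by
  simp only [rf, cfQ_two, Pf_two]
  push_cast
  ring

lemma rf_succ (hg : Good x) (n : ℕ) : rf x (n + 1) = -(Xf x (n + 1)) * rf x n := by
  induction n with
  | zero =>
    have h := one_div_X_eq hg 0
    have h0 : x ≠ 0 := ne_of_gt hg.2.1
    have hx0 : Xf x 0 = x := rfl
    rw [hx0] at h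
    have : (cfA x 1 : ℝ) = 1 / x - Xf x 1 := by linarith
    simp only [rf, cfQ, Pf]
    rw [this]
    field_simp
    ring
  | succ n ih =>
    have h := one_div_X_eq hg (n + 1)
    have h0 : Xf x (n + 1) ≠ 0 := ne_of_gt (good_X hg (n + 1)).2.1
    have key : 1 = (cfA x (n + 2) : ℝ) * Xf x (n + 1) + Xf x (n + 2) * Xf x (n + 1) := by
      field_simp at h
      linarith [h]
    rw [rf_two, ih]
    linear_combination rf x n * key

lemma rf_sign (hg : Good x) (n : ℕ) : 0 < (-1 : ℝ) ^ n * rf x n := by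
  induction n with
  | zero => simpa [rf, cfQ, Pf] using hg.2.1
  | succ n ih =>
    have hX := (good_X hg (n + 1)).2.1
    rw [rf_succ hg n]
    have : (-1 : ℝ) ^ (n + 1) * (-(Xf x (n + 1)) * rf x n)
        = Xf x (n + 1) * ((-1) ^ n * rf x n) := by ring
    rw [this]
    positivity

lemma abs_rf (hg : Good x) (n : ℕ) : |rf x n| = (-1 : ℝ) ^ n * rf x n := by
  have h := rf_sign hg n
  rcases Nat.even_or_odd n with he | ho
  · rw [he.neg_one_pow] at h ⊢; rw [one_mul] at h ⊢; exact abs_of_pos h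
  · rw [ho.neg_one_pow] at h ⊢
    rw [neg_one_mul] at h ⊢
    rw [abs_of_neg (by linarith)]

lemma abs_rf_pos (hg : Good x) (n : ℕ) : 0 < |rf x n| := by
  rw [abs_rf hg]; exact rf_sign hg n

lemma abs_rf_succ (hg : Good x) (n : ℕ) :
    |rf x (n + 1)| = Xf x (n + 1) * |rf x n| := by
  rw [abs_rf hg, abs_rf hg, rf_succ hg]
  ring

lemma Q_ge_one (hg : Good x) (n : ℕ) : 1 ≤ cfQ x n := by
  induction n using Nat.strong_induction_on with
  | _ n ih =>
    match n with
    | 0 => exact le_refl 1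
    | 1 => exact A_ge_one hg 0
    | (m + 2) =>
      rw [cfQ_two]
      have := ih m (by omega)
      nlinarith [A_ge_one hg (m + 1), ih (m + 1) (by omega)]

lemma Q_mono (hg : Good x) (n : ℕ) : cfQ x n ≤ cfQ x (n + 1) := by
  match n with
  | 0 => exact A_ge_one hg 0
  | (m + 1) =>
    rw [cfQ_two]
    nlinarith [A_ge_one hg (m + 1), Q_ge_one hg m, Q_ge_one hg (m + 1)]

lemma Q_ge (hg : Good x) (n : ℕ) : n ≤ cfQ x n := by
  induction n using Nat.strong_induction_on with
  | _ n ih =>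
    match n with
    | 0 => exact Nat.zero_le _
    | 1 => exact A_ge_one hg 0
    | (m + 2) =>
      rw [cfQ_two]
      have h1 := ih (m + 1) (by omega)
      have h2 := Q_ge_one hg m
      nlinarith [A_ge_one hg (m + 1)]

lemma Q_lower (hg : Good x) (n : ℕ) :
    cfA x (n + 1) * cfQ x n ≤ cfQ x (n + 1) := by
  match n with
  | 0 => simp [cfQ]
  | (m + 1) => rw [cfQ_two]; exact Nat.le_add_right _ _

lemma Q_upper (hg : Good x) (n : ℕ) :
    cfQ x (n + 1) ≤ (cfA x (n + 1) + 1) * cfQ x n := by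
  match n with
  | 0 => simp [cfQ]
  | (m + 1) =>
    rw [cfQ_two]
    have := Q_mono hg m
    nlinarith [Q_ge_one hg m]

lemma det_eq (n : ℕ) :
    (cfQ x (n + 1) : ℤ) * Pf x n - (cfQ x n : ℤ) * Pf x (n + 1) = (-1) ^ (n + 1) := by
  induction n with
  | zero => simp [cfQ, Pf]
  | succ n ih =>
    have h1 : (cfQ x (n + 2) : ℤ) = (cfA x (n + 2) : ℤ) * (cfQ x (n + 1) : ℤ) + (cfQ x n : ℤ) := by
      rw [cfQ_two]; push_cast; ring
    rw [h1, Pf_two]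
    linear_combination (-1 : ℤ) * ih

lemma sum_identity (hg : Good x) (n : ℕ) :
    (cfQ x (n + 1) : ℝ) * |rf x n| + (cfQ x n : ℝ) * |rf x (n + 1)| = 1 := by
  have hdet : (cfQ x (n + 1) : ℝ) * (Pf x n : ℝ) - (cfQ x n : ℝ) * (Pf x (n + 1) : ℝ)
      = (-1 : ℝ) ^ (n + 1) := by
    exact_mod_cast congrArg (fun z : ℤ => (z : ℝ)) (det_eq (x := x) n)
  rw [abs_rf hg, abs_rf hg]
  have hsq : (-1 : ℝ) ^ n * (-1 : ℝ) ^ n = 1 := by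
    rw [← pow_add]; exact Even.neg_one_pow ⟨n, by ring⟩
  simp only [rf]
  have hp : (-1 : ℝ) ^ (n + 1) = -((-1) ^ n) := by ring
  rw [hp] at hdet
  push_cast
  linear_combination (-(-1 : ℝ) ^ n) * hdet + hsq

lemma best_approx (hg : Good x) (n : ℕ) (p q : ℤ) (hq1 : 1 ≤ q)
    (hqlt : (q : ℝ) < (cfQ x (n + 1) : ℝ)) :
    |rf x n| ≤ |(q : ℝ) * x - (p : ℝ)| := by
  set Q0 : ℤ := (cfQ x n : ℤ) with hQ0
  set Q1 : ℤ := (cfQ x (n + 1) : ℤ) with hQ1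
  set P0 : ℤ := Pf x n
  set P1 : ℤ := Pf x (n + 1)
  have hdet : Q1 * P0 - Q0 * P1 = (-1) ^ (n + 1) := det_eq n
  have hee : ((-1 : ℤ) ^ (n + 1)) * ((-1 : ℤ) ^ (n + 1)) = 1 := by
    rw [← pow_add]; exact Even.neg_one_pow ⟨n + 1, by ring⟩
  set μ : ℤ := (-1) ^ (n + 1) * (P0 * q - Q0 * p) with hμ
  set ν : ℤ := (-1) ^ (n + 1) * (Q1 * p - P1 * q) with hν
  have hq : μ * Q1 + ν * Q0 = q := by
    rw [hμ, hν]; linear_combination (q * (-1 : ℤ) ^ (n + 1)) * hdet + q * hee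
  have hp : μ * P1 + ν * P0 = p := by
    rw [hμ, hν]; linear_combination (p * (-1 : ℤ) ^ (n + 1)) * hdet + p * hee
  have hQ0p : 1 ≤ Q0 := by rw [hQ0]; exact_mod_cast Q_ge_one hg n
  have hQ1p : 1 ≤ Q1 := by rw [hQ1]; exact_mod_cast Q_ge_one hg (n + 1)
  have hqltZ : q < Q1 := by rw [hQ1]; exact_mod_cast hqlt
  -- rule out same-sign cases
  have hc1 : ¬(1 ≤ μ ∧ 0 ≤ ν) := by
    rintro ⟨h1, h2⟩
    nlinarith [hq, hqltZ]
  have hc2 : ¬(μ ≤ -1 ∧ ν ≤ 0) := by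
    rintro ⟨h1, h2⟩
    nlinarith [hq, hq1]
  have hν0 : ν ≠ 0 := by
    intro hνz
    rcases lt_trichotomy μ 0 with h | h | h
    · exact hc2 ⟨by omega, by omega⟩
    · rw [h, hνz] at hq; simp at hq; omega
    · exact hc1 ⟨by omega, by omega⟩
  have hcases : (μ = 0) ∨ (1 ≤ μ ∧ ν ≤ -1) ∨ (μ ≤ -1 ∧ 1 ≤ ν) := by
    rcases lt_trichotomy μ 0 with h | h | h
    · right; right
      constructor
      · omega
      · by_contra hcon
        exact hc2 ⟨by omega, by omega⟩
    · left; exact h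
    · right; left
      constructor
      · omega
      · by_contra hcon
        exact hc1 ⟨by omega, by omega⟩
  -- real computation
  have hX := good_X hg (n + 1)
  have hX0 : 0 < Xf x (n + 1) := hX.2.1
  have hX1 : Xf x (n + 1) < 1 := hX.2.2
  have hqr : (q : ℝ) * x - (p : ℝ) = rf x n * ((ν : ℝ) - (μ : ℝ) * Xf x (n + 1)) := by
    have hqR : (q : ℝ) = (μ : ℝ) * (Q1 : ℝ) + (ν : ℝ) * (Q0 : ℝ) := by exact_mod_cast congrArg (fun z : ℤ => (z : ℝ)) hq.symm
    have hpR : (p : ℝ) = (μ : ℝ) * (P1 : ℝ) + (ν : ℝ) * (P0 : ℝ) := by exact_mod_cast congrArg (fun z : ℤ => (z : ℝ)) hp.symm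
    have hr1 : rf x (n + 1) = -(Xf x (n + 1)) * rf x n := rf_succ hg n
    have e1 : (q : ℝ) * x - (p : ℝ) = (μ : ℝ) * rf x (n + 1) + (ν : ℝ) * rf x n := by
      rw [hqR, hpR]
      simp only [rf, hQ0, hQ1]
      push_cast
      ring
    rw [e1, hr1]; ring
  have hbound : 1 ≤ |(ν : ℝ) - (μ : ℝ) * Xf x (n + 1)| := by
    rcases hcases with h | ⟨h1, h2⟩ | ⟨h1, h2⟩
    · rw [h]
      simp only [Int.cast_zero, zero_mul, sub_zero]
      have : (1 : ℝ) ≤ |(ν : ℝ)| := by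
        rw [← Int.cast_abs]
        exact_mod_cast Int.one_le_abs hν0
      exact this
    · have hμR : (1 : ℝ) ≤ (μ : ℝ) := by exact_mod_cast h1
      have hνR : (ν : ℝ) ≤ -1 := by exact_mod_cast h2
      rw [abs_sub_comm, le_abs]
      left
      nlinarith
    · have hμR : (μ : ℝ) ≤ -1 := by exact_mod_cast h1
      have hνR : (1 : ℝ) ≤ (ν : ℝ) := by exact_mod_cast h2
      rw [le_abs]
      left
      nlinarith
  rw [hqr, abs_mul]
  nlinarith [abs_rf_pos hg n, hbound, abs_nonneg (rf x n)]

lemma Q_monotone (hg : Good x) : Monotone (cfQ x) :=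
  monotone_nat_of_le_succ (Q_mono hg)

lemma E_lower (hg : Good x) (m : ℕ) :
    (cfA x (m + 1) : ℝ) * (cfA x (m + 2) : ℝ) * ((cfQ x m : ℝ) * |rf x (m + 1)|)
      < (cfQ x (m + 1) : ℝ) * |rf x m| := by
  have hX := good_X hg (m + 1)
  have hX0 : 0 < Xf x (m + 1) := hX.2.1
  have hr : |rf x (m + 1)| = Xf x (m + 1) * |rf x m| := abs_rf_succ hg m
  have h2 : (cfA x (m + 2) : ℝ) * Xf x (m + 1) < 1 := by
    have := A_lt_inv hg (m + 1)
    rw [lt_div_iff₀ hX0] at this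
    linarith
  have h1 : (cfA x (m + 1) : ℝ) * (cfQ x m : ℝ) ≤ (cfQ x (m + 1) : ℝ) := by
    exact_mod_cast Q_lower hg m
  have hrp := abs_rf_pos hg m
  have hQm : (1 : ℝ) ≤ (cfQ x m : ℝ) := by exact_mod_cast Q_ge_one hg m
  have hA1 : (1 : ℝ) ≤ (cfA x (m + 1) : ℝ) := by exact_mod_cast A_ge_one hg m
  have hA1p : (0:ℝ) < (cfA x (m + 1) : ℝ) * (cfQ x m : ℝ) := by nlinarith
  have step0 : ((cfA x (m + 2) : ℝ) * Xf x (m + 1)) * |rf x m| < |rf x m| := by nlinarith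
  have step1 : ((cfA x (m + 1) : ℝ) * (cfQ x m : ℝ)) * (((cfA x (m + 2) : ℝ) * Xf x (m + 1)) * |rf x m|)
      < ((cfA x (m + 1) : ℝ) * (cfQ x m : ℝ)) * |rf x m| :=
    mul_lt_mul_of_pos_left step0 hA1p
  have step2 : ((cfA x (m + 1) : ℝ) * (cfQ x m : ℝ)) * |rf x m| ≤ (cfQ x (m + 1) : ℝ) * |rf x m| :=
    mul_le_mul_of_nonneg_right h1 hrp.le
  have heq : (cfA x (m + 1) : ℝ) * (cfA x (m + 2) : ℝ) * ((cfQ x m : ℝ) * (Xf x (m + 1) * |rf x m|))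
      = ((cfA x (m + 1) : ℝ) * (cfQ x m : ℝ)) * (((cfA x (m + 2) : ℝ) * Xf x (m + 1)) * |rf x m|) := by
    ring
  rw [hr, heq]
  exact lt_of_lt_of_le step1 step2

lemma E_upper (hg : Good x) (m : ℕ) :
    (cfQ x (m + 1) : ℝ) * |rf x m|
      < 4 * ((cfA x (m + 1) : ℝ) * (cfA x (m + 2) : ℝ))
          * ((cfQ x m : ℝ) * |rf x (m + 1)|) := by
  have hX := good_X hg (m + 1)
  have hX0 : 0 < Xf x (m + 1) := hX.2.1
  have hr : |rf x (m + 1)| = Xf x (m + 1) * |rf x m| := abs_rf_succ hg m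
  have h2 : 1 < ((cfA x (m + 2) : ℝ) + 1) * Xf x (m + 1) := by
    have := inv_lt_A_add_one hg (m + 1)
    rw [div_lt_iff₀ hX0] at this
    linarith
  have h1 : (cfQ x (m + 1) : ℝ) ≤ ((cfA x (m + 1) : ℝ) + 1) * (cfQ x m : ℝ) := by
    exact_mod_cast Q_upper hg m
  have hrp := abs_rf_pos hg m
  have hQm : (1 : ℝ) ≤ (cfQ x m : ℝ) := by exact_mod_cast Q_ge_one hg m
  have hQm1 : (1 : ℝ) ≤ (cfQ x (m + 1) : ℝ) := by exact_mod_cast Q_ge_one hg (m + 1)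
  have hA1 : (1 : ℝ) ≤ (cfA x (m + 1) : ℝ) := by exact_mod_cast A_ge_one hg m
  have hA2 : (1 : ℝ) ≤ (cfA x (m + 2) : ℝ) := by exact_mod_cast A_ge_one hg (m + 1)
  have hQmX : (0:ℝ) < (cfQ x m : ℝ) * (Xf x (m + 1) * |rf x m|) := by
    have : (0:ℝ) < (cfQ x m : ℝ) := by linarith
    positivity
  have step1 : (cfQ x (m + 1) : ℝ) * |rf x m| ≤ (((cfA x (m + 1) : ℝ) + 1) * (cfQ x m : ℝ)) * |rf x m| :=
    mul_le_mul_of_nonneg_right h1 hrp.le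
  have step2 : (((cfA x (m + 1) : ℝ) + 1) * (cfQ x m : ℝ)) * |rf x m|
      < (((cfA x (m + 1) : ℝ) + 1) * ((cfA x (m + 2) : ℝ) + 1)) * ((cfQ x m : ℝ) * (Xf x (m + 1) * |rf x m|)) := by
    have hA1p : (0:ℝ) < ((cfA x (m + 1) : ℝ) + 1) * (cfQ x m : ℝ) := by nlinarith
    nlinarith [mul_lt_mul_of_pos_left (show |rf x m| < ((cfA x (m + 2) : ℝ) + 1) * (Xf x (m + 1) * |rf x m|) by nlinarith) hA1p]
  have step3 : ((cfA x (m + 1) : ℝ) + 1) * ((cfA x (m + 2) : ℝ) + 1) ≤ 4 * ((cfA x (m + 1) : ℝ) * (cfA x (m + 2) : ℝ)) := by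
    nlinarith
  have step4 : (((cfA x (m + 1) : ℝ) + 1) * ((cfA x (m + 2) : ℝ) + 1)) * ((cfQ x m : ℝ) * (Xf x (m + 1) * |rf x m|))
      ≤ 4 * ((cfA x (m + 1) : ℝ) * (cfA x (m + 2) : ℝ)) * ((cfQ x m : ℝ) * (Xf x (m + 1) * |rf x m|)) :=
    mul_le_mul_of_nonneg_right step3 hQmX.le
  rw [hr]
  exact lt_of_le_of_lt step1 (lt_of_lt_of_le step2 step4)

lemma bridge1 (a b u C : ℝ) (hab : a + b = 1) (hb : 0 < b) (hu1 : u < 1)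
    (hC : 0 < C) (hPsi : u / (1 - u) < C) (hE : C * b < a) : u ≤ a := by
  rw [div_lt_iff₀ (by linarith : (0:ℝ) < 1 - u)] at hPsi
  by_contra hcon
  push_neg at hcon
  nlinarith

lemma bridge2 (a b u : ℝ) (hab : a + b = 1) (ha : 0 < a) (hb : 0 < b) (hu1 : u < 1)
    (hua : u ≤ a) : u / (1 - u) * b ≤ a := by
  rw [div_mul_eq_mul_div, div_le_iff₀ (by linarith : (0:ℝ) < 1 - u)]
  nlinarith

end KW

/-- **The inclusions `G(Ψ) ⊂ D(ψ)ᶜ ⊂ G(Ψ/4)`**, within the irrational numbers of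
`[0,1)`. -/
theorem GSet_subset_dirichlet_nonimprovable_subset_GSet_quarter
    (t₀ : ℝ) (ht₀ : 1 ≤ t₀) (ψ : ℝ → ℝ)
    (hψpos : ∀ t ∈ Ici t₀, 0 < ψ t) (hψanti : AntitoneOn ψ (Ici t₀))
    (hψ1 : ∃ T : ℝ, ∀ t ≥ T, t * ψ t < 1)
    (Ψ : ℝ → ℝ) (hΨ : ∀ t, Ψ t = t * ψ t / (1 - t * ψ t))
    (x : ℝ) (hx : x ∈ Ico (0 : ℝ) 1) (hirr : Irrational x) :
    (x ∈ GSet Ψ → x ∈ (DirichletSet ψ)ᶜ) ∧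
    (x ∈ (DirichletSet ψ)ᶜ → x ∈ GSet (fun t => Ψ t / 4)) := by
  obtain ⟨T, hT⟩ := hψ1
  have hx0 : 0 < x := lt_of_le_of_ne hx.1 (by simpa using (hirr.ne_int 0).symm)
  have hg : KW.Good x := ⟨hirr, hx0, hx.2⟩
  constructor
  · -- G(Ψ) ⊆ D(ψ)ᶜ
    rintro ⟨-, -, hinf⟩ ⟨N, hN⟩
    obtain ⟨k, hk⟩ := exists_nat_gt (max N (max t₀ T))
    obtain ⟨n, hnS, hkn⟩ := hinf.exists_gt k
    obtain ⟨hn0, hΨn⟩ := hnS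
    obtain ⟨m, rfl⟩ := Nat.exists_eq_succ_of_ne_zero (Nat.pos_iff_ne_zero.mp hn0)
    set qq : ℝ := (cfQ x (m + 1) : ℝ) with hqq
    have hqqn : ((m + 1 : ℕ) : ℝ) ≤ qq := by rw [hqq]; exact_mod_cast KW.Q_ge hg (m + 1)
    have hkq : (k : ℝ) < qq := lt_of_lt_of_le (by exact_mod_cast hkn) hqqn
    have hqqN : qq > N := lt_trans (lt_of_le_of_lt (le_max_left _ _) hk) hkq
    have hqqt₀ : t₀ ≤ qq :=
      le_of_lt (lt_trans (lt_of_le_of_lt (le_trans (le_max_left _ _) (le_max_right _ _)) hk) hkq)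
    have hqqT : T ≤ qq :=
      le_of_lt (lt_trans (lt_of_le_of_lt (le_trans (le_max_right _ _) (le_max_right _ _)) hk) hkq)
    have hqq1 : (1 : ℝ) ≤ qq := le_trans ht₀ hqqt₀
    have hqq0 : (0 : ℝ) < qq := by linarith
    have hψq : 0 < ψ qq := hψpos qq hqqt₀
    have hu1 : qq * ψ qq < 1 := hT qq hqqT
    -- the failure inequality: ψ qq ≤ |rf x m|
    set a : ℝ := qq * |KW.rf x m| with ha_def
    set b : ℝ := (cfQ x m : ℝ) * |KW.rf x (m + 1)| with hb_def
    have hab : a + b = 1 := KW.sum_identity hg m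
    have hb : 0 < b := by
      have h1 : (0:ℝ) < (cfQ x m : ℝ) := by exact_mod_cast KW.Q_ge_one hg m
      exact mul_pos h1 (KW.abs_rf_pos hg (m + 1))
    have hCpos : (0:ℝ) < (cfA x (m + 1) : ℝ) * (cfA x (m + 2) : ℝ) := by
      have h1 : (1:ℝ) ≤ (cfA x (m + 1) : ℝ) := by exact_mod_cast KW.A_ge_one hg m
      have h2 : (1:ℝ) ≤ (cfA x (m + 2) : ℝ) := by exact_mod_cast KW.A_ge_one hg (m + 1)
      nlinarith
    have hPsilt : qq * ψ qq / (1 - qq * ψ qq) < (cfA x (m + 1) : ℝ) * (cfA x (m + 2) : ℝ) := by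
      have := hΨn
      rw [hΨ] at this
      exact_mod_cast this
    have hfail : ψ qq ≤ |KW.rf x m| := by
      have hE := KW.E_lower hg m
      have := KW.bridge1 a b (qq * ψ qq) ((cfA x (m + 1) : ℝ) * (cfA x (m + 2) : ℝ))
        hab hb hu1 hCpos hPsilt (by rw [ha_def, hb_def]; exact_mod_cast hE)
      rw [ha_def] at this
      exact le_of_mul_le_mul_left (by linarith) hqq0
    -- get the claimed solution and contradict
    obtain ⟨p, q, hpq0, hlt, hqlt⟩ := hN qq hqqN
    rcases eq_or_ne q 0 with rfl | hq0
    · have hp0 : p ≠ 0 := by simpa using hpq0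
      have : (1:ℝ) ≤ |(p:ℝ)| := by exact_mod_cast Int.one_le_abs hp0
      have hψsmall : ψ qq < 1 := by nlinarith
      rw [Int.cast_zero, zero_mul, zero_sub, abs_neg] at hlt
      linarith
    · -- reduce to positive q
      obtain ⟨p₁, q₁, hq₁, habs, hlt₁⟩ :
          ∃ p₁ q₁ : ℤ, 1 ≤ q₁ ∧ |(q₁ : ℝ) * x - p₁| = |(q : ℝ) * x - p| ∧ (q₁ : ℝ) < qq := by
        rcases lt_or_gt_of_ne hq0 with h | h
        · refine ⟨-p, -q, by omega, ?_, ?_⟩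
          · push_cast; rw [show (-(q:ℝ)) * x - (-(p:ℝ)) = -((q:ℝ) * x - p) by ring, abs_neg]
          · push_cast
            have : |(q:ℝ)| = -(q:ℝ) := abs_of_neg (by exact_mod_cast h)
            linarith [hqlt]
        · refine ⟨p, q, h, rfl, ?_⟩
          have : |(q:ℝ)| = (q:ℝ) := abs_of_pos (by exact_mod_cast h)
          linarith [hqlt]
      have hbest := KW.best_approx hg m p₁ q₁ hq₁ hlt₁
      rw [habs] at hbest
      linarith
  · -- D(ψ)ᶜ ⊆ G(Ψ/4)
    intro hD
    refine ⟨hx, hirr, ?_⟩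
    apply Set.infinite_of_not_bddAbove
    rintro ⟨k, hk⟩
    simp only [DirichletSet, Set.mem_compl_iff, Set.mem_setOf_eq] at hD
    push_neg at hD
    obtain ⟨t, htN, hnosol⟩ := hD (max ((cfQ x k : ℝ)) (max t₀ T))
    have htt₀ : t₀ < t := lt_of_le_of_lt (le_trans (le_max_left _ _) (le_max_right _ _)) htN
    have htT : T ≤ t := le_of_lt (lt_of_le_of_lt (le_trans (le_max_right _ _) (le_max_right _ _)) htN)
    have htQk : (cfQ x k : ℝ) < t := lt_of_le_of_lt (le_max_left _ _) htN
    have ht1 : (1:ℝ) < t := lt_of_le_of_lt ht₀ htt₀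
    have hex : ∃ n : ℕ, t ≤ (cfQ x n : ℝ) := by
      refine ⟨⌈t⌉₊, le_trans (Nat.le_ceil t) ?_⟩
      exact_mod_cast KW.Q_ge hg ⌈t⌉₊
    set n := Nat.find hex with hn_def
    have hn : t ≤ (cfQ x n : ℝ) := Nat.find_spec hex
    have hn0 : n ≠ 0 := by
      intro h
      rw [h] at hn
      have : cfQ x 0 = 1 := rfl
      rw [this] at hn
      push_cast at hn
      linarith
    obtain ⟨m, hm⟩ := Nat.exists_eq_succ_of_ne_zero hn0
    have hQm : (cfQ x m : ℝ) < t := by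
      have := Nat.find_min hex (m := m) (by omega)
      push_neg at this
      exact this
    have hkn : k < n := by
      by_contra hcon
      push_neg at hcon
      have : (cfQ x n : ℝ) ≤ (cfQ x k : ℝ) := by exact_mod_cast KW.Q_monotone hg hcon
      linarith
    set qq : ℝ := (cfQ x (m + 1) : ℝ) with hqq
    have htqq : t ≤ qq := by
      rw [hqq]
      have h' : t ≤ (cfQ x n : ℝ) := hn
      rw [hm] at h'
      exact h'
    have hqqt₀ : t₀ ≤ qq := le_of_lt (lt_of_lt_of_le htt₀ htqq)
    have hqqT : T ≤ qq := le_trans htT htqq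
    have hqq0 : (0:ℝ) < qq := by linarith
    have hu1 : qq * ψ qq < 1 := hT qq hqqT
    have hψq : 0 < ψ qq := hψpos qq hqqt₀
    -- the convergent (P m, Q m) is not a solution at time t
    have hQm1 : (1:ℤ) ≤ (cfQ x m : ℤ) := by exact_mod_cast KW.Q_ge_one hg m
    have hne : ((KW.Pf x m : ℤ), (cfQ x m : ℤ)) ≠ ((0:ℤ), (0:ℤ)) := by
      intro h
      have := congrArg Prod.snd h
      simp at this
      omega
    have habs : |((cfQ x m : ℤ) : ℝ)| < t := by
      rw [abs_of_pos (by exact_mod_cast (by omega : (0:ℤ) < (cfQ x m : ℤ)))]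
      exact_mod_cast hQm
    have hge := hnosol (KW.Pf x m) ((cfQ x m : ℤ)) hne
    rw [imp_iff_not_or] at hge
    rcases hge with hge | hge
    · push_neg at hge
      have hψt : ψ qq ≤ ψ t := hψanti (le_of_lt htt₀) (le_trans (le_of_lt htt₀) htqq) htqq
      have hrf : ψ qq ≤ |KW.rf x m| := by
        have : ψ t ≤ |((cfQ x m : ℤ) : ℝ) * x - (KW.Pf x m : ℝ)| := hge
        have heq : |((cfQ x m : ℤ) : ℝ) * x - (KW.Pf x m : ℝ)| = |KW.rf x m| := by
          simp [KW.rf]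
        rw [heq] at this
        linarith
      -- conclude the G-condition at n = m + 1
      set a : ℝ := qq * |KW.rf x m| with ha_def
      set b : ℝ := (cfQ x m : ℝ) * |KW.rf x (m + 1)| with hb_def
      have hab : a + b = 1 := KW.sum_identity hg m
      have hb : 0 < b := by
        have h1 : (0:ℝ) < (cfQ x m : ℝ) := by exact_mod_cast KW.Q_ge_one hg m
        exact mul_pos h1 (KW.abs_rf_pos hg (m + 1))
      have ha : 0 < a := mul_pos hqq0 (KW.abs_rf_pos hg m)
      have hua : qq * ψ qq ≤ a := by
        rw [ha_def]
        exact mul_le_mul_of_nonneg_left hrf hqq0.le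
      have hbr := KW.bridge2 a b (qq * ψ qq) hab ha hb hu1 hua
      have hE := KW.E_upper hg m
      have hEa : a < 4 * ((cfA x (m + 1) : ℝ) * (cfA x (m + 2) : ℝ)) * b := by
        rw [ha_def, hb_def]; exact_mod_cast hE
      have hfin : qq * ψ qq / (1 - qq * ψ qq) < 4 * ((cfA x (m + 1) : ℝ) * (cfA x (m + 2) : ℝ)) := by
        have hlt := lt_of_le_of_lt hbr hEa
        exact lt_of_mul_lt_mul_right hlt hb.le
      have hmemS : (m + 1) ∈ {n : ℕ | 0 < n ∧ Ψ (cfQ x n) / 4 < (cfA x n : ℝ) * cfA x (n + 1)} := by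
        refine ⟨Nat.succ_pos m, ?_⟩
        rw [hΨ]
        push_cast
        linarith
      have := hk hmemS
      omega
    · exact absurd habs (not_lt.mpr hge)
end
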